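/- Let ρ be an N×N density matrix and ω a symmetric unitary. For any ensemble {x_j}_{j=0}^{ℓ-1} with ρ = ∑_j x_j x_j†, setting η_{jk} = x_j† ω conj(x_k) and letting λ_0 ≥ λ_1 ≥ ... denote the eigenvalues of (η·conj(η))^{1/2} in nonincreasing order, we have ∑_{j=0}^{ℓ-1} |η_{jj}| ≥ λ_0 − ∑_{p=1}^{ℓ-1} λ_p. -/

import Mathlib

open Matrix Finset Polynomial
open scoped ComplexOrder

namespace Stmt11Aux

variable {n : ℕ}

lemma map_conj_mulVec (A : Matrix (Fin n) (Fin n) ℂ) (w : Fin n → ℂ) :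
    A.map (starRingEnd ℂ) *ᵥ w = star (A *ᵥ star w) := by
  ext k
  simp [Matrix.mulVec, dotProduct, Matrix.map_apply, star_sum]

lemma dot_star_self (v : Fin n → ℂ) :
    star v ⬝ᵥ v = ((∑ j, Complex.normSq (v j) : ℝ) : ℂ) := by
  simp [dotProduct, Complex.normSq_eq_conj_mul_self, Complex.ofReal_sum]

lemma dot_star_self_pos (v : Fin n → ℂ) (hv : v ≠ 0) :
    0 < ∑ j, Complex.normSq (v j) := by
  obtain ⟨j, hj⟩ := Function.ne_iff.mp hv
  exact Finset.sum_pos' (fun i _ => Complex.normSq_nonneg _)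
    ⟨j, Finset.mem_univ j, by simpa [Complex.normSq_pos] using hj⟩

lemma con_dot (A : Matrix (Fin n) (Fin n) ℂ) (hsym : Aᵀ = A) {x : Fin n → ℂ} {c : ℂ}
    (hx : A *ᵥ star x = c • x) (w : Fin n → ℂ) :
    star x ⬝ᵥ (A *ᵥ w) = c * (x ⬝ᵥ w) := by
  have h1 : star x ᵥ* A = c • x := by
    conv_lhs => rw [← hsym]
    rw [Matrix.vecMul_transpose, hx]
  rw [Matrix.dotProduct_mulVec, h1, smul_dotProduct, smul_eq_mul]

lemma con_dot_star (A : Matrix (Fin n) (Fin n) ℂ) (hsym : Aᵀ = A) {x : Fin n → ℂ} {c : ℂ}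
    (hx : A *ᵥ star x = c • x) (w : Fin n → ℂ) :
    star x ⬝ᵥ (A *ᵥ star w) = c * star (star x ⬝ᵥ w) := by
  rw [con_dot A hsym hx (star w)]
  congr 1
  rw [Matrix.star_dotProduct, star_star, dotProduct_comm]

lemma con_dot_G (A : Matrix (Fin n) (Fin n) ℂ) (hsym : Aᵀ = A) {x : Fin n → ℂ} {c : ℂ}
    (hx : A *ᵥ star x = c • x) (w : Fin n → ℂ) :
    star x ⬝ᵥ ((A * A.map (starRingEnd ℂ)) *ᵥ w) = (c * star c) * (star x ⬝ᵥ w) := by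
  rw [← Matrix.mulVec_mulVec, map_conj_mulVec, ← star_star (A *ᵥ star w),
    con_dot_star A hsym hx, star_star, con_dot_star A hsym hx]
  rw [star_mul', star_star]
  ring
lemma exists_con_eigvec_aux {n k : ℕ} (hk : k < n) (G : Matrix (Fin n) (Fin n) ℂ)
    (u : Fin k → (Fin n → ℂ))
    (hGW : ∀ w : Fin n → ℂ, (∀ i, star (u i) ⬝ᵥ w = 0) → (∀ i, star (u i) ⬝ᵥ (G *ᵥ w) = 0)) :
    ∃ (v : Fin n → ℂ) (c : ℂ), v ≠ 0 ∧ (∀ i, star (u i) ⬝ᵥ v = 0) ∧ G *ᵥ v = c • v := by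
  classical
  set V := EuclideanSpace ℂ (Fin n)
  let e := WithLp.equiv 2 (Fin n → ℂ)
  let u' : Fin k → V := fun i => e.symm (u i)
  set W : Submodule ℂ V := (Submodule.span ℂ (Set.range u'))ᗮ with hW
  have hmem : ∀ v : V, v ∈ W ↔ ∀ i, star (u i) ⬝ᵥ (e v) = 0 := by
    intro v
    constructor
    · intro hv i
      have := (Submodule.mem_orthogonal _ v).mp hv (u' i)
        (Submodule.subset_span (Set.mem_range_self i))
      rw [EuclideanSpace.inner_eq_star_dotProduct, dotProduct_comm] at this
      exact this
    · intro h
      rw [Submodule.mem_orthogonal]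
      intro w hw
      induction hw using Submodule.span_induction with
      | mem y hy =>
        obtain ⟨i, rfl⟩ := hy
        rw [EuclideanSpace.inner_eq_star_dotProduct, dotProduct_comm]
        exact h i
      | zero => simp
      | add y z _ _ hy hz => rw [inner_add_left, hy, hz, add_zero]
      | smul c y _ hy => rw [inner_smul_left, hy, mul_zero]
  let T : V →ₗ[ℂ] V := Matrix.toEuclideanLin G
  have hinv : ∀ v ∈ W, T v ∈ W := by
    intro v hv
    rw [hmem] at hv ⊢
    intro i
    have : e (T v) = G *ᵥ (e v) := rfl
    rw [this]
    exact hGW (e v) hv i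
  have hfr : Module.finrank ℂ W + Module.finrank ℂ (Submodule.span ℂ (Set.range u')) = n := by
    rw [add_comm]
    rw [hW, Submodule.finrank_add_finrank_orthogonal]
    exact finrank_euclideanSpace_fin
  have hsp : Module.finrank ℂ (Submodule.span ℂ (Set.range u')) ≤ k := by
    refine le_trans (finrank_span_le_card _) ?_
    rw [Set.toFinset_range]
    exact le_trans (Finset.card_image_le) (by simp)
  have hpos : 0 < Module.finrank ℂ W := by omega
  have : Nontrivial W := Module.nontrivial_of_finrank_pos hpos
  obtain ⟨c, hc⟩ := Module.End.exists_eigenvalue (T.restrict hinv)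
  obtain ⟨v₀, hv₀⟩ := hc.exists_hasEigenvector
  refine ⟨e (v₀ : V), c, ?_, ?_, ?_⟩
  · intro h
    apply hv₀.2
    rw [Submodule.coe_eq_zero.symm]
    exact e.injective (h.trans (by simp [e]))
  · exact (hmem _).mp v₀.2
  · have h1 : T (v₀ : V) = c • (v₀ : V) := by
      have := hv₀.apply_eq_smul
      have h2 := congrArg Subtype.val this
      simpa [LinearMap.restrict_apply] using h2
    have : e (T (v₀ : V)) = G *ᵥ (e (v₀ : V)) := rfl
    rw [← this, h1]
    rfl

lemma exists_normalizer (w : Fin n → ℂ) (hw : w ≠ 0) :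
    ∃ s : ℝ, 0 < s ∧ star (((s:ℝ):ℂ) • w) ⬝ᵥ (((s:ℝ):ℂ) • w) = 1 := by
  set t := ∑ j, Complex.normSq (w j) with ht
  have htpos : 0 < t := dot_star_self_pos w hw
  refine ⟨(Real.sqrt t)⁻¹, by positivity, ?_⟩
  rw [star_smul, smul_dotProduct, dotProduct_smul, dot_star_self, ← ht]
  rw [smul_eq_mul, smul_eq_mul, RCLike.star_def, Complex.conj_ofReal]
  rw [← Complex.ofReal_mul, ← Complex.ofReal_mul]
  rw [show (Real.sqrt t)⁻¹ * ((Real.sqrt t)⁻¹ * t) = (Real.sqrt t * Real.sqrt t)⁻¹ * t by ring]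
  rw [Real.mul_self_sqrt htpos.le, inv_mul_cancel₀ htpos.ne', Complex.ofReal_one]

lemma snoc_step {n k : ℕ} (A : Matrix (Fin n) (Fin n) ℂ)
    (u : Fin k → (Fin n → ℂ)) (μ : Fin k → ℝ)
    (horm : ∀ i j, star (u i) ⬝ᵥ u j = if i = j then (1:ℂ) else 0)
    (hμ : ∀ i, 0 ≤ μ i)
    (hcon : ∀ i, A *ᵥ star (u i) = ((μ i : ℝ) : ℂ) • u i)
    (w : Fin n → ℂ) (μ' : ℝ) (hw0 : w ≠ 0) (hμ' : 0 ≤ μ')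
    (hworth : ∀ i, star (u i) ⬝ᵥ w = 0)
    (hwcon : A *ᵥ star w = ((μ' : ℝ) : ℂ) • w) :
    ∃ (u' : Fin (k+1) → (Fin n → ℂ)) (ν : Fin (k+1) → ℝ),
      (∀ i j, star (u' i) ⬝ᵥ u' j = if i = j then (1:ℂ) else 0) ∧ (∀ i, 0 ≤ ν i) ∧
      (∀ i, A *ᵥ star (u' i) = ((ν i : ℝ) : ℂ) • u' i) := by
  classical
  obtain ⟨s, hs, hs1⟩ := exists_normalizer w hw0
  set unew : Fin n → ℂ := ((s:ℝ):ℂ) • w with hunew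
  have hustar : star unew = ((s:ℝ):ℂ) • star w := by
    rw [hunew, star_smul, RCLike.star_def, Complex.conj_ofReal]
  have hucon : A *ᵥ star unew = ((μ' : ℝ) : ℂ) • unew := by
    rw [hustar, Matrix.mulVec_smul, hwcon, hunew, smul_comm]
  have huorth : ∀ i, star (u i) ⬝ᵥ unew = 0 := by
    intro i
    rw [hunew, dotProduct_smul, hworth i, smul_zero]
  have huorth' : ∀ i, star unew ⬝ᵥ u i = 0 := by
    intro i
    rw [Matrix.star_dotProduct, huorth i, star_zero]
  refine ⟨Fin.snoc u unew, Fin.snoc μ μ', ?_, ?_, ?_⟩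
  · intro i j
    induction i using Fin.lastCases with
    | last =>
      induction j using Fin.lastCases with
      | last => simpa [Fin.snoc_last] using hs1
      | cast j' =>
        rw [Fin.snoc_last, Fin.snoc_castSucc, if_neg (Fin.castSucc_lt_last j').ne']
        exact huorth' j'
    | cast i' =>
      induction j using Fin.lastCases with
      | last =>
        rw [Fin.snoc_last, Fin.snoc_castSucc, if_neg (Fin.castSucc_lt_last i').ne]
        exact huorth i'
      | cast j' =>
        rw [Fin.snoc_castSucc, Fin.snoc_castSucc, horm i' j']
        simp [Fin.castSucc_inj]
  · intro i
    induction i using Fin.lastCases with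
    | last => simpa [Fin.snoc_last] using hμ'
    | cast i' => simpa [Fin.snoc_castSucc] using hμ i'
  · intro i
    induction i using Fin.lastCases with
    | last => simpa [Fin.snoc_last] using hucon
    | cast i' => simpa [Fin.snoc_castSucc] using hcon i'

lemma map_conj_conj (M : Matrix (Fin n) (Fin n) ℂ) :
    (M.map (starRingEnd ℂ)).map (starRingEnd ℂ) = M := by
  ext i j; simp

lemma transpose_map_conj (M : Matrix (Fin n) (Fin n) ℂ) :
    (M.map (starRingEnd ℂ))ᵀ = Mᵀ.map (starRingEnd ℂ) := by
  ext i j; simp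

lemma takagi_exists {n : ℕ} (A : Matrix (Fin n) (Fin n) ℂ) (hsym : Aᵀ = A) :
    ∃ (u : Fin n → (Fin n → ℂ)) (μ : Fin n → ℝ),
      (∀ i j, star (u i) ⬝ᵥ u j = if i = j then (1:ℂ) else 0) ∧ (∀ i, 0 ≤ μ i) ∧
      (∀ i, A *ᵥ star (u i) = ((μ i : ℝ) : ℂ) • u i) := by
  classical
  have key : ∀ k, k ≤ n → ∃ (u : Fin k → (Fin n → ℂ)) (μ : Fin k → ℝ),
      (∀ i j, star (u i) ⬝ᵥ u j = if i = j then (1:ℂ) else 0) ∧ (∀ i, 0 ≤ μ i) ∧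
      (∀ i, A *ᵥ star (u i) = ((μ i : ℝ) : ℂ) • u i) := by
    intro k
    induction k with
    | zero => exact fun _ => ⟨fun i => i.elim0, fun i => i.elim0,
        fun i => i.elim0, fun i => i.elim0, fun i => i.elim0⟩
    | succ k ih =>
      intro hk
      obtain ⟨u, μ, horm, hμ, hcon⟩ := ih (Nat.le_of_succ_le hk)
      set G := A * A.map (starRingEnd ℂ) with hG
      have hconjA : A.map (starRingEnd ℂ) = Aᴴ := by
        ext i j
        simp only [Matrix.map_apply, Matrix.conjTranspose_apply]
        have hAij : A i j = A j i := congrFun (congrFun hsym j) i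
        rw [hAij]
        rfl
      have hGpsd : G.PosSemidef := by
        rw [hG, hconjA]; exact Matrix.posSemidef_self_mul_conjTranspose A
      have hGW : ∀ w : Fin n → ℂ, (∀ i, star (u i) ⬝ᵥ w = 0) →
          (∀ i, star (u i) ⬝ᵥ (G *ᵥ w) = 0) := by
        intro w hw i
        rw [hG, con_dot_G A hsym (hcon i) w, hw i, mul_zero]
      obtain ⟨v, c, hv0, hvW, hGv⟩ := exists_con_eigvec_aux (Nat.lt_of_succ_le hk) G u hGW
      set t := ∑ j, Complex.normSq (v j) with ht
      have htpos : 0 < t := dot_star_self_pos v hv0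
      have hct : (0:ℂ) ≤ c * (t : ℂ) := by
        have h0 := hGpsd.dotProduct_mulVec_nonneg v
        rwa [hGv, dotProduct_smul, smul_eq_mul, dot_star_self, ← ht] at h0
      have hre0 : 0 ≤ c.re ∧ c.im = 0 := by
        rw [Complex.le_def] at hct
        obtain ⟨h1, h2⟩ := hct
        simp only [Complex.zero_re, Complex.zero_im, Complex.mul_re, Complex.mul_im,
          Complex.ofReal_re, Complex.ofReal_im, mul_zero, zero_mul, sub_zero, add_zero,
          zero_add] at h1 h2
        constructor
        · exact (mul_nonneg_iff_of_pos_right htpos).mp h1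
        · rcases mul_eq_zero.mp h2.symm with h | h
          · exact h
          · exact absurd h htpos.ne'
      set r := c.re with hr
      have hcr : c = ((r:ℝ):ℂ) := by
        apply Complex.ext
        · simp [hr]
        · simp [hre0.2]
      -- the orthogonality of A *ᵥ star v to the old u's
      have hAvorth : ∀ i, star (u i) ⬝ᵥ (A *ᵥ star v) = 0 := by
        intro i
        rw [con_dot_star A hsym (hcon i) v, hvW i, star_zero, mul_zero]
      rcases eq_or_lt_of_le hre0.1 with hr0 | hrpos
      · -- r = 0 : A *ᵥ star v = 0
        have hGv0 : G *ᵥ v = 0 := by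
          rw [hGv, hcr, ← hr0]
          simp
        have hAv0 : A *ᵥ star v = 0 := by
          have hsymbar : (A.map (starRingEnd ℂ))ᵀ = A.map (starRingEnd ℂ) := by
            rw [transpose_map_conj, hsym]
          have hGconj : G.map (starRingEnd ℂ) = A.map (starRingEnd ℂ) * A := by
            rw [hG, Matrix.map_mul, map_conj_conj]
          have hd : star (A *ᵥ star v) ⬝ᵥ (A *ᵥ star v) = 0 := by
            have hstarw : star (A *ᵥ star v) = A.map (starRingEnd ℂ) *ᵥ v := by
              rw [map_conj_mulVec]
            rw [hstarw, dotProduct_comm, Matrix.dotProduct_mulVec]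
            have : (A *ᵥ star v) ᵥ* (A.map (starRingEnd ℂ)) =
                (A.map (starRingEnd ℂ)) *ᵥ (A *ᵥ star v) := by
              conv_lhs => rw [← hsymbar]
              rw [Matrix.vecMul_transpose]
            rw [this, Matrix.mulVec_mulVec, ← hGconj]
            have : G.map (starRingEnd ℂ) *ᵥ star v = star (G *ᵥ v) := by
              rw [map_conj_mulVec, star_star]
            rw [this, hGv0, star_zero, zero_dotProduct]
          exact dotProduct_star_self_eq_zero.mp hd
        have hwcon : A *ᵥ star v = ((0:ℝ):ℂ) • v := by rw [hAv0]; simp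
        exact snoc_step A u μ horm hμ hcon v 0 hv0 le_rfl hvW hwcon
      · -- r > 0
        set μ' := Real.sqrt r with hμ'
        have hμ'pos : 0 < μ' := Real.sqrt_pos.mpr hrpos
        have hμ'sq : ((r:ℝ):ℂ) = ((μ':ℝ):ℂ) * ((μ':ℝ):ℂ) := by
          rw [← Complex.ofReal_mul, Real.mul_self_sqrt hrpos.le]
        set w₀ : Fin n → ℂ := ((μ':ℝ):ℂ) • v + A *ᵥ star v with hw₀
        have hstarw₀ : star w₀ = ((μ':ℝ):ℂ) • star v + A.map (starRingEnd ℂ) *ᵥ v := by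
          rw [hw₀, star_add, star_smul, RCLike.star_def, Complex.conj_ofReal, map_conj_mulVec]
        have hw₀con : A *ᵥ star w₀ = ((μ':ℝ):ℂ) • w₀ := by
          rw [hstarw₀, Matrix.mulVec_add, Matrix.mulVec_smul, Matrix.mulVec_mulVec, ← hG, hGv,
            hcr, hμ'sq, hw₀]
          module
        have hw₀orth : ∀ i, star (u i) ⬝ᵥ w₀ = 0 := by
          intro i
          rw [hw₀, dotProduct_add, dotProduct_smul, hvW i, hAvorth i,
            smul_zero, add_zero]
        by_cases hw₀0 : w₀ = 0
        · -- A *ᵥ star v = -μ' v ; use I • v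
          have hAv : A *ᵥ star v = -(((μ':ℝ):ℂ) • v) := by
            rw [eq_neg_iff_add_eq_zero, add_comm]
            rw [hw₀] at hw₀0
            exact hw₀0
          set w₁ : Fin n → ℂ := Complex.I • v with hw₁
          have hw₁0 : w₁ ≠ 0 := smul_ne_zero Complex.I_ne_zero hv0
          have hw₁orth : ∀ i, star (u i) ⬝ᵥ w₁ = 0 := by
            intro i
            rw [hw₁, dotProduct_smul, hvW i, smul_zero]
          have hw₁con : A *ᵥ star w₁ = ((μ':ℝ):ℂ) • w₁ := by
            rw [hw₁, star_smul, Matrix.mulVec_smul, hAv, Complex.star_def, Complex.conj_I]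
            module
          exact snoc_step A u μ horm hμ hcon w₁ μ' hw₁0 hμ'pos.le hw₁orth hw₁con
        · exact snoc_step A u μ horm hμ hcon w₀ μ' hw₀0 hμ'pos.le hw₀orth hw₀con
  exact key n le_rfl

lemma charpoly_diagonal' {m : ℕ} (d : Fin m → ℂ) :
    (Matrix.diagonal d).charpoly = ∏ i, (X - C (d i)) := by
  have h : charmatrix (Matrix.diagonal d) = Matrix.diagonal (fun i => (X:ℂ[X]) - C (d i)) := by
    ext i j
    by_cases hij : i = j
    · subst hij
      rw [charmatrix_apply_eq, Matrix.diagonal_apply_eq, Matrix.diagonal_apply_eq]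
    · rw [charmatrix_apply_ne _ _ _ hij, Matrix.diagonal_apply_ne _ hij,
        Matrix.diagonal_apply_ne _ hij, map_zero, neg_zero]
  rw [Matrix.charpoly, h, Matrix.det_diagonal]

lemma charpoly_unitary_conj {m : ℕ} (U B : Matrix (Fin m) (Fin m) ℂ)
    (h1 : U * Uᴴ = 1) :
    (U * B * Uᴴ).charpoly = B.charpoly := by
  have hm : charmatrix (U * B * Uᴴ) = (U.map ⇑C) * charmatrix B * (Uᴴ.map ⇑C) := by
    simp only [charmatrix, RingHom.mapMatrix_apply]
    rw [Matrix.mul_sub, Matrix.sub_mul, Matrix.map_mul, Matrix.map_mul]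
    congr 1
    rw [← (Matrix.scalar_commute (X:ℂ[X]) (fun r => Commute.all _ r) (U.map ⇑C)).eq,
      Matrix.mul_assoc, ← Matrix.map_mul, h1,
      Matrix.map_one _ (map_zero C) (map_one C), Matrix.mul_one]
  rw [Matrix.charpoly, hm, Matrix.det_mul, Matrix.det_mul, Matrix.charpoly]
  have hdet : (U.map ⇑C).det * ((Uᴴ).map ⇑C).det = 1 := by
    rw [← RingHom.mapMatrix_apply, ← RingHom.mapMatrix_apply, ← RingHom.map_det,
      ← RingHom.map_det, ← _root_.map_mul, ← Matrix.det_mul, h1, Matrix.det_one, _root_.map_one]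
  rw [mul_right_comm, hdet, one_mul]
end Stmt11Aux

open Stmt11Aux in
/-- lower bound ∑_j |η_{jj}| ≥ λ₀ − ∑_{p≥1} λ_p for any ensemble of ρ, where
the λ's are the nonincreasing eigenvalues of (η conj(η))^{1/2}. -/
theorem stmt_11 (N ℓ : ℕ) [NeZero ℓ] (ρ : Matrix (Fin N) (Fin N) ℂ)
    (hρ : ρ.PosSemidef) (htr : ρ.trace = 1)
    (ω : Matrix (Fin N) (Fin N) ℂ) (hω : ω * ωᴴ = 1) (hωsym : ω = ωᵀ)
    (x : Fin ℓ → (Fin N → ℂ))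
    (hx : ρ = ∑ j, Matrix.vecMulVec (x j) (star (x j)))
    (η : Matrix (Fin ℓ) (Fin ℓ) ℂ)
    (hη : η = Matrix.of fun j k =>
      dotProduct (star (x j)) (ω.mulVec (star (x k))))
    (P : Matrix (Fin ℓ) (Fin ℓ) ℂ) (hP : P.PosSemidef)
    (hPsq : P * P = η * η.map (starRingEnd ℂ))
    (lam : Fin ℓ → ℝ) (hmono : Antitone lam) (hnonneg : ∀ i, 0 ≤ lam i)
    (hspec : P.charpoly = ∏ i, (Polynomial.X - Polynomial.C (lam i : ℂ))) :
    lam 0 - ∑ p ∈ Finset.univ.erase 0, lam p ≤ ∑ j, ‖η j j‖ := by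
  classical
  have hsym : ηᵀ = η := by
    subst hη
    ext j k
    simp only [Matrix.transpose_apply, Matrix.of_apply]
    rw [Matrix.dotProduct_mulVec, dotProduct_comm]
    congr 1
    conv_lhs => rw [hωsym]
    rw [Matrix.vecMul_transpose]
  obtain ⟨u, μ, horm, hμ, hcon⟩ := takagi_exists η hsym
  set U : Matrix (Fin ℓ) (Fin ℓ) ℂ := Matrix.of (fun j i => u i j) with hU
  have hUH : Uᴴ * U = 1 := by
    ext i i'
    simp only [Matrix.mul_apply, Matrix.conjTranspose_apply, Matrix.one_apply, hU,
      Matrix.of_apply]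
    simpa [dotProduct] using horm i i'
  have hUU : U * Uᴴ = 1 := mul_eq_one_comm.mp hUH
  set D : Matrix (Fin ℓ) (Fin ℓ) ℂ := Matrix.diagonal (fun i => ((μ i : ℝ):ℂ)) with hD
  have hAU : η * U.map (starRingEnd ℂ) = U * D := by
    ext j i
    have hL : (η * U.map (starRingEnd ℂ)) j i = (η *ᵥ star (u i)) j := by
      simp [Matrix.mul_apply, Matrix.mulVec, dotProduct, hU, Matrix.map_apply]
    have hR : (U * D) j i = ((μ i : ℝ):ℂ) * u i j := by
      rw [hD, Matrix.mul_diagonal]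
      simp [hU, mul_comm]
    rw [hL, hR, hcon i]
    simp
  have hUconjT : Uᴴ.map (starRingEnd ℂ) = Uᵀ := by
    ext i j; simp
  have hUmapT : U.map (starRingEnd ℂ) * Uᵀ = 1 := by
    have h := congrArg (fun M : Matrix (Fin ℓ) (Fin ℓ) ℂ => M.map (starRingEnd ℂ)) hUU
    simpa [Matrix.map_mul, hUconjT] using h
  have hTU : Uᵀ * U.map (starRingEnd ℂ) = 1 := mul_eq_one_comm.mp hUmapT
  have hηUDUT : η = U * D * Uᵀ := by
    calc η = η * 1 := by rw [Matrix.mul_one]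
    _ = η * (U.map (starRingEnd ℂ) * Uᵀ) := by rw [hUmapT]
    _ = (η * U.map (starRingEnd ℂ)) * Uᵀ := by rw [Matrix.mul_assoc]
    _ = U * D * Uᵀ := by rw [hAU]
  set π : Matrix (Fin ℓ) (Fin ℓ) ℂ := U * D * Uᴴ with hπ
  have hDpsd : D.PosSemidef := by
    rw [hD]
    refine Matrix.posSemidef_diagonal_iff.mpr fun i => ?_
    exact Complex.zero_le_real.mpr (hμ i)
  have hπpsd : π.PosSemidef := hDpsd.mul_mul_conjTranspose_same U
  have hDconj : D.map (starRingEnd ℂ) = D := by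
    ext i j
    rw [hD]
    by_cases h : i = j
    · subst h; simp
    · simp [Matrix.diagonal_apply_ne _ h]
  have hηconj : η.map (starRingEnd ℂ) = U.map (starRingEnd ℂ) * D * Uᴴ := by
    have hUTconj : Uᵀ.map (starRingEnd ℂ) = Uᴴ := by ext i j; simp
    rw [hηUDUT, Matrix.map_mul, Matrix.map_mul, hDconj, hUTconj]
  have hππ : π * π = η * η.map (starRingEnd ℂ) := by
    rw [hπ, hηconj]
    conv_rhs => rw [hηUDUT]
    have e1 : Uᴴ * (U * (D * Uᴴ)) = D * Uᴴ := by rw [← Matrix.mul_assoc, hUH, Matrix.one_mul]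
    have e2 : Uᵀ * (U.map (starRingEnd ℂ) * (D * Uᴴ)) = D * Uᴴ := by
      rw [← Matrix.mul_assoc, hTU, Matrix.one_mul]
    simp only [Matrix.mul_assoc, e1, e2]
  have hπP : π = P := by
    open scoped MatrixOrder in
    exact (CFC.sq_eq_sq_iff π P hπpsd.nonneg hP.nonneg).mp (by rw [pow_two, pow_two, hππ, hPsq])
  have hcp : ∏ i, (X - C ((lam i : ℝ):ℂ)) = ∏ i, (X - C ((μ i : ℝ):ℂ)) := by
    rw [← hspec, ← hπP, hπ, charpoly_unitary_conj U D hUU, hD, charpoly_diagonal']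
  have hms : Multiset.map (fun i => ((lam i : ℝ):ℂ)) Finset.univ.val
      = Multiset.map (fun i => ((μ i : ℝ):ℂ)) Finset.univ.val := by
    have e : ∀ f : Fin ℓ → ℂ, (∏ i, (X - C (f i)))
        = (Multiset.map (fun a => X - C a) (Multiset.map f Finset.univ.val)).prod := by
      intro f
      rw [Multiset.map_map, Finset.prod_eq_multiset_prod]
      rfl
    have h1 := congrArg Polynomial.roots hcp
    rwa [e (fun i => ((lam i : ℝ):ℂ)), e (fun i => ((μ i : ℝ):ℂ)),
      Polynomial.roots_multiset_prod_X_sub_C, Polynomial.roots_multiset_prod_X_sub_C] at h1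
  have hmsR : Multiset.map lam Finset.univ.val = Multiset.map μ Finset.univ.val := by
    apply Multiset.map_injective (f := fun r : ℝ => (r:ℂ)) Complex.ofReal_injective
    rw [Multiset.map_map, Multiset.map_map]
    exact hms
  have hsum : ∑ i, μ i = ∑ i, lam i := by
    have h := congrArg Multiset.sum hmsR
    rw [Finset.sum_eq_multiset_sum, Finset.sum_eq_multiset_sum]
    exact h.symm
  obtain ⟨i₀, hi₀⟩ : ∃ i₀, μ i₀ = lam 0 := by
    have h0 : lam 0 ∈ Multiset.map μ Finset.univ.val := by
      rw [← hmsR]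
      exact Multiset.mem_map.mpr ⟨0, Finset.mem_val.mpr (Finset.mem_univ 0), rfl⟩
    obtain ⟨i₀, _, h⟩ := Multiset.mem_map.mp h0
    exact ⟨i₀, h⟩
  have hnorm1 : ∀ p, ∑ j, (‖u p j‖)^2 = 1 := by
    intro p
    have h := horm p p
    rw [if_pos rfl, dot_star_self] at h
    have h2 : ∑ j, Complex.normSq (u p j) = 1 := by exact_mod_cast h
    rw [← h2]
    exact Finset.sum_congr rfl fun j _ => Complex.sq_norm _
  have hdiag : ∀ j, η j j = ∑ p, ((μ p : ℝ):ℂ) * (u p j)^2 := by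
    intro j
    conv_lhs => rw [hηUDUT]
    rw [Matrix.mul_apply]
    refine Finset.sum_congr rfl fun p _ => ?_
    rw [hD, Matrix.mul_diagonal, Matrix.transpose_apply]
    simp [hU]
    ring
  have hpoint : ∀ j, μ i₀ * (‖u i₀ j‖)^2
      - ∑ p ∈ Finset.univ.erase i₀, μ p * (‖u p j‖)^2 ≤ ‖η j j‖ := by
    intro j
    set a := ((μ i₀ : ℝ):ℂ) * (u i₀ j)^2 with ha'
    set b := ∑ p ∈ Finset.univ.erase i₀, ((μ p : ℝ):ℂ) * (u p j)^2 with hb'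
    have hab : η j j = a + b := by
      rw [hdiag j, ← Finset.add_sum_erase _ _ (Finset.mem_univ i₀)]
    have ha : ‖a‖ = μ i₀ * (‖u i₀ j‖)^2 := by
      rw [ha', norm_mul, norm_pow, Complex.norm_real, Real.norm_of_nonneg (hμ i₀)]
    have hb : ‖b‖ ≤ ∑ p ∈ Finset.univ.erase i₀, μ p * (‖u p j‖)^2 := by
      refine le_trans (norm_sum_le _ _) (le_of_eq ?_)
      refine Finset.sum_congr rfl fun p _ => ?_
      rw [norm_mul, norm_pow, Complex.norm_real, Real.norm_of_nonneg (hμ p)]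
    have htri : ‖a‖ - ‖b‖ ≤ ‖a + b‖ := by
      have h := norm_add_le (a + b) (-b)
      rw [add_neg_cancel_right, norm_neg] at h
      linarith
    rw [hab, ← ha]
    linarith
  have hsum2 : ∑ j, (μ i₀ * (‖u i₀ j‖)^2
      - ∑ p ∈ Finset.univ.erase i₀, μ p * (‖u p j‖)^2)
      = μ i₀ - ∑ p ∈ Finset.univ.erase i₀, μ p := by
    rw [Finset.sum_sub_distrib]
    congr 1
    · rw [← Finset.mul_sum, hnorm1, mul_one]
    · rw [Finset.sum_comm]
      refine Finset.sum_congr rfl fun p _ => ?_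
      rw [← Finset.mul_sum, hnorm1, mul_one]
  have hineq : μ i₀ - ∑ p ∈ Finset.univ.erase i₀, μ p ≤ ∑ j, ‖η j j‖ := by
    rw [← hsum2]
    exact Finset.sum_le_sum fun j _ => hpoint j
  have h1 : ∑ p ∈ Finset.univ.erase i₀, μ p = (∑ p, μ p) - μ i₀ := by
    rw [← Finset.add_sum_erase _ _ (Finset.mem_univ i₀)]
    ring
  have h2 : ∑ p ∈ Finset.univ.erase 0, lam p = (∑ p, lam p) - lam 0 := by
    rw [← Finset.add_sum_erase _ _ (Finset.mem_univ 0)]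
    ring
  rw [h2]
  rw [h1, hi₀, hsum] at hineq
  linarith
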